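/- Meet-irreducibility of total degrees within total degrees: for any total functions f, g, h : ℕ → ℕ, if f ∩ g ≤subT h then f ≤subT h or g ≤subT h, where f ∩ g is the subTuring meet. Consequently there is no minimal pair of total subTuring degrees: there are no noncomputable total f, g such that every partial function below both has a partial computable extension. -/

import Mathlib

open Classical

noncomputable section

/-- `as` is a valid answer history for the sequential oracle computation of `Φ`
with oracle `g` on input `n`: at each round `k`, the machine outputs a query
`(false, q)` with `q` in the domain of `g`, answered by `g q = as[k]`. -/
def ValidHist (Φ : List ℕ →. Bool × ℕ) (g : ℕ →. ℕ) (n : ℕ) (as : List ℕ) : Prop :=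
  ∀ (k : ℕ) (hk : k < as.length), ∃ q : ℕ,
    (false, q) ∈ Φ (n :: as.take k) ∧ (as[k]'hk) ∈ g q

/-- The sequential oracle computation `Φ[g](n)` halts with output `m`. -/
def HaltsTo (Φ : List ℕ →. Bool × ℕ) (g : ℕ →. ℕ) (n m : ℕ) : Prop :=
  ∃ as : List ℕ, ValidHist Φ g n as ∧ (true, m) ∈ Φ (n :: as)

/-- subTuring reducibility: `f ⊆ Φ[g]` for some partial computable `Φ`. -/
def SubTuringLE (f g : ℕ →. ℕ) : Prop :=
  ∃ Φ : List ℕ →. Bool × ℕ, Partrec Φ ∧ ∀ n m, m ∈ f n → HaltsTo Φ g n m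

/-- subTuring equivalence. -/
def SubTuringEquiv (f g : ℕ →. ℕ) : Prop := SubTuringLE f g ∧ SubTuringLE g f

/-- The `e`-th partial computable function `List ℕ →. Bool × ℕ`,
obtained from the `e`-th partial recursive code. -/
def phi (e : ℕ) : List ℕ →. Bool × ℕ := fun l =>
  ((Denumerable.ofNat Nat.Partrec.Code e).eval (Encodable.encode l)).bind fun k =>
    Part.ofOption (Encodable.decode (α := Bool × ℕ) k)

/-- The meet `f ∩ g`: on input `⟨d, e, n⟩` it takes the common value of
`Φ_d[f](n)` and `Φ_e[g](n)` when both converge and agree; undefined otherwise. -/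
def PMeet (f g : ℕ →. ℕ) : ℕ →. ℕ := fun p =>
  ⟨∃ m, HaltsTo (phi p.unpair.1) f p.unpair.2.unpair.2 m ∧
        HaltsTo (phi p.unpair.2.unpair.1) g p.unpair.2.unpair.2 m,
   fun h => Classical.choose h⟩

namespace STAux

open Nat.Partrec Nat.Partrec.Code Encodable

lemma mem_coe {f : ℕ → ℕ} {n m : ℕ} : m ∈ (f : ℕ →. ℕ) n ↔ m = f n := by
  rw [PFun.coe_val, Part.mem_some_iff]

lemma validHist_take {Φ : List ℕ →. Bool × ℕ} {g : ℕ → ℕ} {n : ℕ} {as as' : List ℕ}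
    (h1 : ValidHist Φ (g : ℕ →. ℕ) n as) (h2 : ValidHist Φ (g : ℕ →. ℕ) n as') :
    ∀ k, k ≤ as.length → k ≤ as'.length → as.take k = as'.take k := by
  intro k
  induction k with
  | zero => simp
  | succ k ih =>
    intro hk hk'
    have hlt : k < as.length := hk
    have hlt' : k < as'.length := hk'
    have ht := ih (le_of_lt hlt) (le_of_lt hlt')
    obtain ⟨q, hq, ha⟩ := h1 k hlt
    obtain ⟨q', hq', ha'⟩ := h2 k hlt'
    rw [ht] at hq
    have hqq : q = q' := by
      have := Part.mem_unique hq hq'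
      simpa using this
    subst hqq
    rw [mem_coe] at ha ha'
    have he : as[k] = as'[k] := by rw [ha, ha']
    rw [List.take_succ, List.take_succ, ht]
    congr 1
    rw [List.getElem?_eq_getElem hlt, List.getElem?_eq_getElem hlt', he]

lemma haltsTo_eq_hist {Φ : List ℕ →. Bool × ℕ} {g : ℕ → ℕ} {n x : ℕ} {bs bs' : List ℕ}
    (hv : ValidHist Φ (g : ℕ →. ℕ) n bs) (hv' : ValidHist Φ (g : ℕ →. ℕ) n bs')
    (hm : (true, x) ∈ Φ (n :: bs)) (hle : bs.length ≤ bs'.length) : bs = bs' := by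
  have htk : bs'.take bs.length = bs := by
    have := validHist_take hv' hv bs.length hle le_rfl
    rw [this, List.take_length]
  rcases lt_or_eq_of_le hle with hlt | heq
  · obtain ⟨q, hq, _⟩ := hv' bs.length hlt
    rw [htk] at hq
    exact absurd (Part.mem_unique hq hm) (by simp)
  · rw [← htk, heq, List.take_length]

lemma haltsTo_unique {Φ : List ℕ →. Bool × ℕ} {g : ℕ → ℕ} {n m m' : ℕ}
    (h : HaltsTo Φ (g : ℕ →. ℕ) n m) (h' : HaltsTo Φ (g : ℕ →. ℕ) n m') : m = m' := by
  obtain ⟨as, hv, hm⟩ := h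
  obtain ⟨as', hv', hm'⟩ := h'
  have heq : as = as' := by
    rcases le_total as.length as'.length with hle | hle
    · exact haltsTo_eq_hist hv hv' hm hle
    · exact (haltsTo_eq_hist hv' hv hm' hle).symm
  subst heq
  have := Part.mem_unique hm hm'
  simpa using this

def CodeFor (Ψ : List ℕ →. Bool × ℕ) (c : Code) : Prop :=
  ∀ l : List ℕ, eval c (encode l) = (Ψ l).map encode

lemma exists_codeFor {Ψ : List ℕ →. Bool × ℕ} (h : Partrec Ψ) : ∃ c, CodeFor Ψ c := by
  obtain ⟨c, hc⟩ := Code.exists_code.1 h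
  refine ⟨c, fun l => ?_⟩
  rw [hc]
  simp [encodek]

lemma codeFor_mem {Ψ : List ℕ →. Bool × ℕ} {c : Code} (h : CodeFor Ψ c) {l : List ℕ}
    {x : Bool × ℕ} : x ∈ Ψ l ↔ encode x ∈ eval c (encode l) := by
  rw [h l, Part.mem_map_iff]
  constructor
  · exact fun hx => ⟨x, hx, rfl⟩
  · rintro ⟨y, hy, he⟩
    rwa [encode_injective he] at hy

lemma codeFor_mem' {Ψ : List ℕ →. Bool × ℕ} {c : Code} (h : CodeFor Ψ c) {l : List ℕ}
    {r : ℕ} (hr : r ∈ eval c (encode l)) : ∃ x ∈ Ψ l, encode x = r := by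
  rw [h l, Part.mem_map_iff] at hr
  exact hr

def tk (as : List ℕ) (k : ℕ) : List ℕ := (List.range k).map fun i => as.getD i 0

lemma tk_eq_take {as : List ℕ} {k : ℕ} (h : k ≤ as.length) : tk as k = as.take k := by
  apply List.ext_getElem
  · simp [tk, Nat.min_eq_left h]
  · intro i h1 h2
    simp only [tk, List.getElem_map, List.getElem_range, List.getElem_take]
    rw [List.getD_eq_getElem]

def allSome (L : List (Option ℕ)) : Option (List ℕ) :=
  L.foldr (fun o acc => o.bind fun a => acc.map fun M => a :: M) (some [])

lemma allSome_eq_some {L : List (Option ℕ)} {M : List ℕ} :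
    allSome L = some M ↔ L = M.map some := by
  induction L generalizing M with
  | nil => cases M <;> simp [allSome]
  | cons o L ih =>
    cases o with
    | none => cases M <;> simp [allSome]
    | some a =>
      cases M with
      | nil => simp [allSome, Option.bind_eq_some_iff, Option.map_eq_some_iff]
      | cons b M' =>
        simp only [allSome, List.foldr_cons, Option.bind_some, Option.map_eq_some_iff,
          List.map_cons, List.cons.injEq, Option.some.injEq]
        constructor
        · rintro ⟨M'', hM'', h1, h2⟩
          have := (ih (M := M'')).1 hM''
          exact ⟨h1, by rw [this, h2]⟩
        · rintro ⟨h1, h2⟩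
          exact ⟨M', (ih (M := M')).2 h2, h1, rfl⟩

def histCheck (c : Code) (X : ℕ) (as : List ℕ) (s : ℕ) : Option (List ℕ) :=
  allSome ((List.range as.length).map fun k =>
    (evaln s c (encode (X :: tk as k))).bind fun r =>
      (decode (α := Bool × ℕ) r).bind fun p => bif p.1 then none else some p.2)

def finalCheck (c : Code) (X : ℕ) (as : List ℕ) (s m : ℕ) : Bool :=
  decide (((evaln s c (encode (X :: as))).bind fun r => decode (α := Bool × ℕ) r)
    = some (true, m))


lemma exists_bound {P : ℕ → ℕ → Prop} (mono : ∀ k {s s'}, s ≤ s' → P k s → P k s')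
    (m : ℕ) (H : ∀ k, k < m → ∃ s, P k s) : ∃ s, ∀ k, k < m → P k s := by
  induction m with
  | zero => exact ⟨0, fun k hk => absurd hk (Nat.not_lt_zero k)⟩
  | succ m ih =>
    obtain ⟨s1, hs1⟩ := ih fun k hk => H k (Nat.lt_succ_of_lt hk)
    obtain ⟨s2, hs2⟩ := H m (Nat.lt_succ_self m)
    refine ⟨max s1 s2, fun k hk => ?_⟩
    rcases Nat.lt_succ_iff_lt_or_eq.1 hk with h | h
    · exact mono k (le_max_left _ _) (hs1 k h)
    · subst h; exact mono k (le_max_right _ _) hs2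

section Checks

variable {Ψ : List ℕ →. Bool × ℕ} {c : Code}

lemma histCheck_sound (hC : CodeFor Ψ c) {X : ℕ} {as : List ℕ} {s : ℕ} {qs : List ℕ}
    (h : histCheck c X as s = some qs) :
    qs.length = as.length ∧
      ∀ k, k < as.length → ((false, qs.getD k 0) : Bool × ℕ) ∈ Ψ (X :: as.take k) := by
  rw [histCheck, allSome_eq_some] at h
  have hlen : as.length = qs.length := by
    have := congrArg List.length h
    simpa using this
  refine ⟨hlen.symm, fun k hk => ?_⟩
  have hk2 : k < ((List.range as.length).map fun k =>
      (evaln s c (encode (X :: tk as k))).bind fun r =>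
        (decode (α := Bool × ℕ) r).bind fun p => bif p.1 then none else some p.2).length := by
    simpa using hk
  have e1 := List.getElem_of_eq h hk2
  rw [List.getElem_map, List.getElem_range] at e1
  have hkq : k < qs.length := hlen ▸ hk
  rw [List.getElem_map (h := by simpa using hkq)] at e1
  rw [Option.bind_eq_some_iff] at e1
  obtain ⟨r, hr, e2⟩ := e1
  rw [Option.bind_eq_some_iff] at e2
  obtain ⟨p, hp, e3⟩ := e2
  have hre : r ∈ eval c (encode (X :: as.take k)) := by
    rw [← tk_eq_take (le_of_lt hk)]
    exact evaln_sound hr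
  obtain ⟨x, hx, hxr⟩ := codeFor_mem' hC hre
  have hpx : p = x := by
    rw [← hxr, encodek] at hp
    exact (Option.some.injEq _ _ ▸ hp).symm
  subst hpx
  obtain ⟨b, v⟩ := p
  cases b with
  | true => simp at e3
  | false =>
    simp only [Bool.cond_false, Option.some.injEq] at e3
    rw [List.getD_eq_getElem _ _ hkq, ← e3]
    exact hx

lemma checks_complete (hC : CodeFor Ψ c) {X : ℕ} {as : List ℕ} {m : ℕ} {Q : ℕ → ℕ}
    (hq : ∀ k, k < as.length → ((false, Q k) : Bool × ℕ) ∈ Ψ (X :: as.take k))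
    (hm : ((true, m) : Bool × ℕ) ∈ Ψ (X :: as)) :
    ∃ s, histCheck c X as s = some ((List.range as.length).map Q) ∧
      finalCheck c X as s m = true := by
  have key : ∃ s, ∀ k, k < as.length + 1 →
      evaln s c (encode (X :: as.take k)) =
        some (encode (if k < as.length then ((false, Q k) : Bool × ℕ) else (true, m))) := by
    apply exists_bound
    · intro k s s' hss hP
      exact evaln_mono hss hP
    · intro k hk
      rcases Nat.lt_or_ge k as.length with h | h
      · have := (codeFor_mem hC).1 (hq k h)
        obtain ⟨s, hs⟩ := evaln_complete.1 this
        exact ⟨s, by rw [if_pos h]; exact hs⟩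
      · have hke : k = as.length := le_antisymm (Nat.lt_succ_iff.1 hk) h
        subst hke
        have := (codeFor_mem hC).1 hm
        obtain ⟨s, hs⟩ := evaln_complete.1 this
        exact ⟨s, by rw [if_neg (lt_irrefl _), List.take_length]; exact hs⟩
  obtain ⟨s, hs⟩ := key
  refine ⟨s, ?_, ?_⟩
  · rw [histCheck, allSome_eq_some, List.map_map]
    apply List.map_congr_left
    intro k hk
    rw [List.mem_range] at hk
    have := hs k (Nat.lt_succ_of_lt hk)
    rw [if_pos hk, ← tk_eq_take (le_of_lt hk)] at this
    simp only [Function.comp_apply, this, Option.bind_some, encodek, Bool.cond_false]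
  · have := hs as.length (Nat.lt_succ_self _)
    rw [if_neg (lt_irrefl _), List.take_length] at this
    rw [finalCheck, this]
    simp [encodek]

lemma histCheck_mono {X : ℕ} {as : List ℕ} {s s' : ℕ} {qs : List ℕ} (hss : s ≤ s')
    (h : histCheck c X as s = some qs) : histCheck c X as s' = some qs := by
  rw [histCheck, allSome_eq_some] at h ⊢
  have hlen : as.length = qs.length := by
    have := congrArg List.length h
    simpa using this
  apply List.ext_getElem
  · simpa using hlen
  · intro i h1 h2
    have h1' : i < as.length := by simpa using h1
    have e1 := List.getElem_of_eq h (by simpa using h1')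
    rw [List.getElem_map, List.getElem_range] at e1
    rw [List.getElem_map]
    rw [List.getElem_map, List.getElem_range]
    rw [List.getElem_map] at e1
    rw [Option.bind_eq_some_iff] at e1
    obtain ⟨r, hr, e2⟩ := e1
    rw [Option.bind_eq_some_iff]
    exact ⟨r, evaln_mono hss hr, e2⟩

lemma finalCheck_mono {X : ℕ} {as : List ℕ} {s s' m : ℕ} (hss : s ≤ s')
    (h : finalCheck c X as s m = true) : finalCheck c X as s' m = true := by
  rw [finalCheck, decide_eq_true_iff] at h ⊢
  rw [Option.bind_eq_some_iff] at h ⊢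
  obtain ⟨r, hr, h2⟩ := h
  exact ⟨r, evaln_mono hss hr, h2⟩

lemma finalCheck_sound (hC : CodeFor Ψ c) {X : ℕ} {as : List ℕ} {s m : ℕ}
    (h : finalCheck c X as s m = true) : ((true, m) : Bool × ℕ) ∈ Ψ (X :: as) := by
  rw [finalCheck, decide_eq_true_iff, Option.bind_eq_some_iff] at h
  obtain ⟨r, hr, h2⟩ := h
  have hre : r ∈ eval c (encode (X :: as)) := evaln_sound hr
  obtain ⟨x, hx, hxr⟩ := codeFor_mem' hC hre
  have : x = ((true, m) : Bool × ℕ) := by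
    rw [← hxr, encodek, Option.some.injEq] at h2
    exact h2
  rwa [this] at hx

end Checks

/-! ### The tester machines and their codes -/

def Tfun (σ : List ℕ) (l : List ℕ) : Bool × ℕ :=
  if l.length ≤ σ.length then (false, l.length - 1)
  else (true, if l.tail = σ then 0 else 1)

lemma Tfun_computable : Computable₂ Tfun := by
  have h1 : Primrec₂ Tfun := by
    apply Primrec.ite
    · exact Primrec.nat_le.comp (Primrec.list_length.comp Primrec.snd)
        (Primrec.list_length.comp Primrec.fst)
    · exact (Primrec.const false).pair
        (Primrec.pred.comp (Primrec.list_length.comp Primrec.snd))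
    · apply (Primrec.const true).pair
      apply Primrec.ite
      · exact Primrec.eq.comp (Primrec.list_tail.comp Primrec.snd) Primrec.fst
      · exact Primrec.const 0
      · exact Primrec.const 1
  exact h1.to_comp

def TN : ℕ →. ℕ := fun x =>
  Part.some (Encodable.encode (Tfun (Denumerable.ofNat (List ℕ) x.unpair.1)
    (Denumerable.ofNat (List ℕ) x.unpair.2)))

lemma TN_partrec : Nat.Partrec TN := by
  have h1 : Computable fun x : ℕ => Encodable.encode
      (Tfun (Denumerable.ofNat (List ℕ) x.unpair.1) (Denumerable.ofNat (List ℕ) x.unpair.2)) := by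
    apply Computable.encode.comp
    apply Tfun_computable.comp
    · exact ((Computable.ofNat (List ℕ)).comp
        (Computable.fst.comp (Primrec.unpair.to_comp)))
    · exact ((Computable.ofNat (List ℕ)).comp
        (Computable.snd.comp (Primrec.unpair.to_comp)))
  have h2 : TN = fun x : ℕ => ((fun x : ℕ => Encodable.encode
      (Tfun (Denumerable.ofNat (List ℕ) x.unpair.1) (Denumerable.ofNat (List ℕ) x.unpair.2))) x :
        Part ℕ) := rfl
  rw [← Partrec.nat_iff, h2]
  exact h1.partrec

def cT : Code := Classical.choose (Code.exists_code.1 TN_partrec)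

lemma cT_spec : eval cT = TN := Classical.choose_spec (Code.exists_code.1 TN_partrec)

def dcode (σ : List ℕ) : ℕ := encode (curry cT (encode σ))

lemma dcode_primrec : Primrec dcode :=
  Primrec.encode.comp (primrec₂_curry.comp (Primrec.const cT) Primrec.encode)

lemma phi_dcode (σ l : List ℕ) : phi (dcode σ) l = Part.some (Tfun σ l) := by
  show ((Denumerable.ofNat Code (dcode σ)).eval (encode l)).bind _ = _
  rw [dcode, Denumerable.ofNat_encode, eval_curry, cT_spec]
  show (TN (Nat.pair (encode σ) (encode l))).bind _ = _
  rw [TN]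
  simp only [Nat.unpair_pair, Denumerable.ofNat_encode]
  rw [Part.bind_some, encodek]
  rfl

lemma tester_halts {f : ℕ → ℕ} {σ : List ℕ} {n m : ℕ} :
    HaltsTo (phi (dcode σ)) (f : ℕ →. ℕ) n m ↔
      m = if (List.range σ.length).map f = σ then 0 else 1 := by
  constructor
  · rintro ⟨as, hv, hm⟩
    rw [phi_dcode, Part.mem_some_iff] at hm
    -- length analysis
    have hge : σ.length ≤ as.length := by
      by_contra hlt
      push_neg at hlt
      have : (n :: as).length ≤ σ.length := by simpa using hlt
      rw [Tfun, if_pos this] at hm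
      simp at hm
    have hle : as.length ≤ σ.length := by
      by_contra hgt
      push_neg at hgt
      obtain ⟨q, hq, _⟩ := hv σ.length hgt
      rw [phi_dcode, Part.mem_some_iff] at hq
      have hlen : (n :: as.take σ.length).length = σ.length + 1 := by
        simp [Nat.min_eq_left (le_of_lt hgt)]
      rw [Tfun, hlen, if_neg (by omega)] at hq
      simp at hq
    have hlen : as.length = σ.length := le_antisymm hle hge
    have has : as = (List.range σ.length).map f := by
      apply List.ext_getElem
      · simpa using hlen
      · intro i h1 h2
        obtain ⟨q, hq, ha⟩ := hv i h1
        rw [phi_dcode, Part.mem_some_iff] at hq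
        have hl2 : (n :: as.take i).length = i + 1 := by
          simp [Nat.min_eq_left (le_of_lt h1)]
        rw [Tfun, hl2, if_pos (by omega)] at hq
        have hq2 : q = i := by
          have := congrArg Prod.snd hq
          simpa using this
        subst hq2
        rw [mem_coe] at ha
        rw [ha]
        simp
    have hl3 : ¬ ((n :: as).length ≤ σ.length) := by simp [hlen]
    rw [Tfun, if_neg hl3] at hm
    have hm2 := congrArg Prod.snd hm
    simp only [List.tail_cons] at hm2
    rw [has] at hm2
    exact hm2
  · intro hm
    refine ⟨(List.range σ.length).map f, ?_, ?_⟩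
    · intro k hk
      have hk' : k < σ.length := by simpa using hk
      refine ⟨k, ?_, ?_⟩
      · rw [phi_dcode, Part.mem_some_iff]
        have hl2 : (n :: ((List.range σ.length).map f).take k).length = k + 1 := by
          simp [Nat.min_eq_left (le_of_lt hk')]
        rw [Tfun, hl2, if_pos (by omega)]
        simp
      · rw [mem_coe]
        simp
    · rw [phi_dcode, Part.mem_some_iff]
      have hl3 : ¬ ((n :: (List.range σ.length).map f).length ≤ σ.length) := by simp
      rw [Tfun, if_neg hl3, hm]
      simp
      exact if_congr Iff.rfl rfl rfl


/-! ### The generic search machine -/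

def zipD (l₁ l₂ : List ℕ) : List (ℕ × ℕ) :=
  (List.range l₁.length).map fun i => (l₁.getD i 0, l₂.getD i 0)

lemma mem_zipD {l₁ l₂ : List ℕ} {p : ℕ × ℕ} :
    p ∈ zipD l₁ l₂ ↔ ∃ i, i < l₁.length ∧ p = (l₁.getD i 0, l₂.getD i 0) := by
  simp only [zipD, List.mem_map, List.mem_range]
  constructor
  · rintro ⟨i, hi, rfl⟩; exact ⟨i, hi, rfl⟩
  · rintro ⟨i, hi, rfl⟩; exact ⟨i, hi, rfl⟩

lemma zipD_primrec : Primrec₂ zipD := by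
  apply Primrec.list_map (Primrec.list_range.comp (Primrec.list_length.comp Primrec.fst))
  exact ((Primrec.list_getD 0).comp (Primrec.fst.comp Primrec.fst) Primrec.snd).pair
    ((Primrec.list_getD 0).comp (Primrec.snd.comp Primrec.fst) Primrec.snd)

def allB (as : List ℕ) (qas : List (ℕ × ℕ)) : Bool :=
  qas.foldr (fun p b =>
    (bif decide (p.1 < as.length) then decide (as.getD p.1 0 = p.2) else false) && b) true

lemma allB_iff {as : List ℕ} {qas : List (ℕ × ℕ)} :
    allB as qas = true ↔ ∀ p ∈ qas, p.1 < as.length ∧ as.getD p.1 0 = p.2 := by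
  induction qas with
  | nil => simp [allB]
  | cons p l ih =>
    rw [allB, List.foldr_cons, Bool.and_eq_true]
    rw [allB] at ih
    rw [ih]
    rcases Nat.lt_or_ge p.1 as.length with h | h
    · simp [h]
    · simp [Nat.not_lt_of_ge h, h]

lemma allB_primrec : Primrec₂ allB := by
  have hstep : Primrec₂ fun (a : List ℕ × List (ℕ × ℕ)) (x : (ℕ × ℕ) × Bool) =>
      ((bif decide (x.1.1 < a.1.length) then decide (a.1.getD x.1.1 0 = x.1.2) else false)
        && x.2) := by
    have has : Primrec fun y : (List ℕ × List (ℕ × ℕ)) × ((ℕ × ℕ) × Bool) => y.1.1 :=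
      Primrec.fst.comp Primrec.fst
    have hp : Primrec fun y : (List ℕ × List (ℕ × ℕ)) × ((ℕ × ℕ) × Bool) => y.2.1 :=
      Primrec.fst.comp Primrec.snd
    have hb : Primrec fun y : (List ℕ × List (ℕ × ℕ)) × ((ℕ × ℕ) × Bool) => y.2.2 :=
      Primrec.snd.comp Primrec.snd
    have h1 : Primrec fun y : (List ℕ × List (ℕ × ℕ)) × ((ℕ × ℕ) × Bool) =>
        decide (y.2.1.1 < y.1.1.length) :=
      (Primrec.nat_lt.comp (Primrec.fst.comp hp) (Primrec.list_length.comp has)).decide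
    have h2 : Primrec fun y : (List ℕ × List (ℕ × ℕ)) × ((ℕ × ℕ) × Bool) =>
        decide (y.1.1.getD y.2.1.1 0 = y.2.1.2) :=
      (Primrec.eq.comp ((Primrec.list_getD 0).comp has (Primrec.fst.comp hp))
        (Primrec.snd.comp hp)).decide
    have h3 : Primrec fun y : (List ℕ × List (ℕ × ℕ)) × ((ℕ × ℕ) × Bool) =>
        (bif decide (y.2.1.1 < y.1.1.length) then decide (y.1.1.getD y.2.1.1 0 = y.2.1.2)
          else false) := h1.cond h2 (Primrec.const false)
    exact (h3.cond hb (Primrec.const false)).of_eq fun y => by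
      cases hx : (bif decide (y.2.1.1 < y.1.1.length) then decide (y.1.1.getD y.2.1.1 0 = y.2.1.2)
          else false) <;> cases hb2 : y.2.2 <;> simp only [] <;> rw [hx, hb2] <;> rfl
  exact Primrec.list_foldr (f := Prod.snd) (g := fun _ => true)
    Primrec.snd (Primrec.const true) hstep

def stepF (pre : ℕ → ℕ → Option (List (ℕ × ℕ) × ℕ)) (n : ℕ) (as : List ℕ) (k : ℕ)
    (prev : Option (Bool × ℕ)) : Option (Bool × ℕ) :=
  Option.casesOn prev
    (Option.casesOn (pre n k) Option.none fun x =>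
      bif allB as x.1 then some (true, x.2) else Option.none)
    fun r => some r

variable {pre : ℕ → ℕ → Option (List (ℕ × ℕ) × ℕ)} {n : ℕ} {as : List ℕ} {k : ℕ}

lemma stepF_nn (h : pre n k = Option.none) :
    stepF pre n as k Option.none = Option.none := by simp [stepF, h]

lemma stepF_ns {x : List (ℕ × ℕ) × ℕ} (h : pre n k = some x) :
    stepF pre n as k Option.none =
      (bif allB as x.1 then some (true, x.2) else Option.none) := by simp [stepF, h]

lemma stepF_s {r : Bool × ℕ} : stepF pre n as k (some r) = some r := rfl

def searchFold (pre : ℕ → ℕ → Option (List (ℕ × ℕ) × ℕ)) (n : ℕ) (as : List ℕ) :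
    ℕ → Option (Bool × ℕ) :=
  fun k => Nat.rec Option.none (fun t ih => stepF pre n as t ih) k

lemma searchFold_succ :
    searchFold pre n as (k + 1) = stepF pre n as k (searchFold pre n as k) := rfl

lemma searchFold_none_iff :
    ∀ k, searchFold pre n as k = Option.none ↔
      ∀ t, t < k → ∀ qas out, pre n t = some (qas, out) → allB as qas = false := by
  intro k
  induction k with
  | zero =>
    constructor
    · intro _ t ht; exact absurd ht (Nat.not_lt_zero t)
    · intro _; rfl
  | succ k ih =>
    rw [searchFold_succ]
    rcases hsf : searchFold pre n as k with _ | r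
    · rcases hp : pre n k with _ | x
      · rw [stepF_nn hp]
        constructor
        · intro _ t ht qas out hpre
          rcases Nat.lt_succ_iff_lt_or_eq.1 ht with h | h
          · exact (ih.1 hsf) t h qas out hpre
          · subst h; rw [hp] at hpre; exact absurd hpre (by simp)
        · intro _; rfl
      · rw [stepF_ns hp]
        rcases hall : allB as x.1 with _ | _
        · rw [Bool.cond_false]
          constructor
          · intro _ t ht qas out hpre
            rcases Nat.lt_succ_iff_lt_or_eq.1 ht with h | h
            · exact (ih.1 hsf) t h qas out hpre
            · subst h
              rw [hp, Option.some.injEq] at hpre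
              rw [hpre] at hall
              exact hall
          · intro _; rfl
        · rw [Bool.cond_true]
          constructor
          · intro h; exact absurd h (by simp)
          · intro h
            have := h k (Nat.lt_succ_self k) x.1 x.2 (by rw [hp])
            rw [hall] at this
            exact absurd this (by simp)
    · rw [stepF_s]
      constructor
      · intro h; exact absurd h (by simp)
      · intro h
        have h0 : searchFold pre n as k = Option.none := by
          rw [ih]
          intro t ht qas out hpre
          exact h t (Nat.lt_succ_of_lt ht) qas out hpre
        rw [hsf] at h0
        exact absurd h0 (by simp)

lemma searchFold_some :
    ∀ k r, searchFold pre n as k = some r →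
      ∃ t, t < k ∧ ∃ qas out, pre n t = some (qas, out) ∧ allB as qas = true ∧
        r = (true, out) := by
  intro k
  induction k with
  | zero => intro r h; exact absurd h (by simp [searchFold])
  | succ k ih =>
    intro r h
    rw [searchFold_succ] at h
    rcases hsf : searchFold pre n as k with _ | r'
    · rw [hsf] at h
      rcases hp : pre n k with _ | x
      · rw [stepF_nn hp] at h; exact absurd h (by simp)
      · rw [stepF_ns hp] at h
        rcases hall : allB as x.1 with _ | _
        · rw [hall, Bool.cond_false] at h; exact absurd h (by simp)
        · rw [hall, Bool.cond_true, Option.some.injEq] at h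
          refine ⟨k, Nat.lt_succ_self k, x.1, x.2, by rw [hp], hall, h.symm⟩
    · rw [hsf, stepF_s, Option.some.injEq] at h
      subst h
      obtain ⟨t, ht, rest⟩ := ih r' hsf
      exact ⟨t, Nat.lt_succ_of_lt ht, rest⟩

def searchM (pre : ℕ → ℕ → Option (List (ℕ × ℕ) × ℕ)) (l : List ℕ) : Bool × ℕ :=
  (searchFold pre l.headI l.tail l.tail.length).getD (false, l.tail.length)

lemma searchM_computable {pre : ℕ → ℕ → Option (List (ℕ × ℕ) × ℕ)}
    (hpre : Primrec₂ pre) : Computable (searchM pre) := by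
  have htail : Primrec fun l : List ℕ => l.tail := Primrec.list_tail
  have hhead : Primrec fun l : List ℕ => l.headI := Primrec.list_headI
  have hstep : Primrec₂ fun (x : List ℕ × (ℕ × Option (Bool × ℕ)))
      (y : List (ℕ × ℕ) × ℕ) =>
      (bif allB x.1.tail y.1 then some ((true, y.2) : Bool × ℕ) else Option.none) := by
    have hx : Primrec fun z : (List ℕ × (ℕ × Option (Bool × ℕ))) × (List (ℕ × ℕ) × ℕ) =>
        z.2 := Primrec.snd
    exact Primrec.cond
      (allB_primrec.comp ((htail.comp Primrec.fst).comp Primrec.fst) (Primrec.fst.comp hx))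
      (Primrec.option_some.comp ((Primrec.const true).pair (Primrec.snd.comp hx)))
      (Primrec.const Option.none)
  have hstep2 : Primrec₂ (fun (l : List ℕ) (p : ℕ × Option (Bool × ℕ)) =>
      stepF pre l.headI l.tail p.1 p.2) := by
    have hn : Primrec fun x : List ℕ × (ℕ × Option (Bool × ℕ)) => x.1.headI :=
      hhead.comp Primrec.fst
    have ht : Primrec fun x : List ℕ × (ℕ × Option (Bool × ℕ)) => x.2.1 :=
      Primrec.fst.comp Primrec.snd
    have hprev : Primrec fun x : List ℕ × (ℕ × Option (Bool × ℕ)) => x.2.2 :=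
      Primrec.snd.comp Primrec.snd
    show Primrec fun x : List ℕ × (ℕ × Option (Bool × ℕ)) =>
      stepF pre x.1.headI x.1.tail x.2.1 x.2.2
    unfold stepF
    apply Primrec.option_casesOn hprev
    · exact Primrec.option_casesOn (hpre.comp hn ht) (Primrec.const Option.none) hstep
    · exact (Primrec.option_some.comp Primrec.snd).to₂
  have hfold : Primrec fun l : List ℕ => searchFold pre l.headI l.tail l.tail.length :=
    Primrec.nat_rec' (f := fun l : List ℕ => l.tail.length)
      (g := fun _ : List ℕ => (Option.none : Option (Bool × ℕ)))
      (h := fun (l : List ℕ) (p : ℕ × Option (Bool × ℕ)) =>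
        stepF pre l.headI l.tail p.1 p.2)
      (Primrec.list_length.comp htail) (Primrec.const Option.none) hstep2
  have hM : Primrec (searchM pre) := by
    unfold searchM
    exact Primrec.option_getD.comp hfold
      ((Primrec.const false).pair (Primrec.list_length.comp htail))
  exact hM.to_comp

theorem search_reduction {h F : ℕ → ℕ} {pre : ℕ → ℕ → Option (List (ℕ × ℕ) × ℕ)}
    (hpre : Primrec₂ pre)
    (sound : ∀ n t qas out, pre n t = some (qas, out) → (∀ p ∈ qas, h p.1 = p.2) → out = F n)
    (ex : ∀ n, ∃ t qas out, pre n t = some (qas, out) ∧ ∀ p ∈ qas, h p.1 = p.2) :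
    SubTuringLE (F : ℕ →. ℕ) (h : ℕ →. ℕ) := by
  classical
  refine ⟨fun l => Part.some (searchM pre l), (searchM_computable hpre).partrec, ?_⟩
  intro n m hm
  rw [mem_coe] at hm
  subst hm
  have hVk : ∃ k, ∃ t, t < k ∧ ∃ qas out, pre n t = some (qas, out) ∧
      allB ((List.range k).map h) qas = true := by
    obtain ⟨t, qas, out, hp, hans⟩ := ex n
    have hmax : ∀ x ∈ qas.map Prod.fst, x ≤ (qas.map Prod.fst).foldr max 0 := by
      induction qas.map Prod.fst with
      | nil => intro x hx; simp at hx
      | cons a l ih =>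
        intro x hx
        rcases List.mem_cons.1 hx with h1 | h1
        · subst h1; exact le_max_left _ _
        · exact le_trans (ih x h1) (le_max_right _ _)
    set K0 := max (t + 1) ((qas.map Prod.fst).foldr max 0 + 1) with hK0
    refine ⟨K0, t, by omega, qas, out, hp, ?_⟩
    rw [allB_iff]
    intro p hp2
    have h1 : p.1 < K0 := by
      have := hmax p.1 (List.mem_map_of_mem hp2)
      omega
    have h2 : p.1 < ((List.range K0).map h).length := by simpa using h1
    refine ⟨h2, ?_⟩
    rw [List.getD_eq_getElem _ _ h2, List.getElem_map, List.getElem_range]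
    exact hans p hp2
  set K := Nat.find hVk with hK
  have hKspec := Nat.find_spec hVk
  refine ⟨(List.range K).map h, ?_, ?_⟩
  · intro k hk
    have hkK : k < K := by simpa using hk
    have htake : ((List.range K).map h).take k = (List.range k).map h := by
      rw [← List.map_take, List.take_range, Nat.min_eq_left (le_of_lt hkK)]
    refine ⟨k, ?_, ?_⟩
    · rw [htake, Part.mem_some_iff]
      have hnone : searchFold pre n ((List.range k).map h) k = Option.none := by
        rw [searchFold_none_iff]
        intro t ht qas out hp
        rcases hb : allB ((List.range k).map h) qas with _ | _
        · rfl
        · exact absurd ⟨t, ht, qas, out, hp, hb⟩ (Nat.find_min hVk hkK)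
      rw [searchM]
      show (false, k) =
        ((searchFold pre n ((List.range k).map h) (((List.range k).map h).length)).getD
          (false, ((List.range k).map h).length))
      have hlen : ((List.range k).map h).length = k := by simp
      rw [hlen, hnone]
      rfl
    · rw [mem_coe]
      simp
  · rw [Part.mem_some_iff]
    rw [searchM]
    show (true, F n) =
      ((searchFold pre n ((List.range K).map h) (((List.range K).map h).length)).getD
        (false, ((List.range K).map h).length))
    have hlen : ((List.range K).map h).length = K := by simp
    rw [hlen]
    rcases hsf : searchFold pre n ((List.range K).map h) K with _ | r
    · exfalso
      rw [searchFold_none_iff] at hsf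
      obtain ⟨t, ht, qas, out, hp, hall⟩ := hKspec
      have := hsf t ht qas out hp
      rw [hall] at this
      exact absurd this (by simp)
    · obtain ⟨t, ht, qas, out, hp, hall, hr⟩ := searchFold_some K r hsf
      have hans : ∀ p ∈ qas, h p.1 = p.2 := by
        intro p hp2
        obtain ⟨h1, h2⟩ := allB_iff.1 hall p hp2
        have h3 : p.1 < K := by simpa using h1
        rw [List.getD_eq_getElem _ _ h1, List.getElem_map, List.getElem_range] at h2
        exact h2
      have hout : out = F n := sound n t qas out hp hans
      rw [hr, hout]
      rfl


/-! ### Primitive recursiveness of the checkers -/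

lemma allSome_primrec : Primrec allSome := by
  have hstep : Primrec₂ fun (_ : List (Option ℕ)) (y : Option ℕ × Option (List ℕ)) =>
      y.1.bind fun q => y.2.map fun M => q :: M := by
    have h1 : Primrec fun z : (List (Option ℕ) × (Option ℕ × Option (List ℕ))) => z.2.1 :=
      Primrec.fst.comp Primrec.snd
    have h2 : Primrec fun z : (List (Option ℕ) × (Option ℕ × Option (List ℕ))) => z.2.2 :=
      Primrec.snd.comp Primrec.snd
    exact Primrec.option_bind h1
      (Primrec.option_map (h2.comp Primrec.fst)
        (Primrec.list_cons.comp (Primrec.snd.comp Primrec.fst) Primrec.snd))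
  exact Primrec.list_foldr (f := fun L : List (Option ℕ) => L)
    (g := fun _ => some ([] : List ℕ)) Primrec.id (Primrec.const (some [])) hstep

lemma tk_primrec : Primrec₂ tk := by
  apply Primrec.list_map (Primrec.list_range.comp Primrec.snd)
  exact (Primrec.list_getD 0).comp (Primrec.fst.comp Primrec.fst) Primrec.snd

lemma histCheck_primrec (c : Code) :
    Primrec₂ fun (X : ℕ) (p : List ℕ × ℕ) => histCheck c X p.1 p.2 := by
  have hX : Primrec fun x : ℕ × (List ℕ × ℕ) => x.1 := Primrec.fst
  have has : Primrec fun x : ℕ × (List ℕ × ℕ) => x.2.1 := Primrec.fst.comp Primrec.snd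
  have hs : Primrec fun x : ℕ × (List ℕ × ℕ) => x.2.2 := Primrec.snd.comp Primrec.snd
  have hinner : Primrec₂ fun (x : ℕ × (List ℕ × ℕ)) (k : ℕ) =>
      (evaln x.2.2 c (Encodable.encode (x.1 :: tk x.2.1 k))).bind fun r =>
        (Encodable.decode (α := Bool × ℕ) r).bind fun p =>
          bif p.1 then Option.none else some p.2 := by
    have hev : Primrec fun y : (ℕ × (List ℕ × ℕ)) × ℕ =>
        evaln y.1.2.2 c (Encodable.encode (y.1.1 :: tk y.1.2.1 y.2)) := by
      have harg : Primrec fun y : (ℕ × (List ℕ × ℕ)) × ℕ =>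
          ((y.1.2.2, c), Encodable.encode (y.1.1 :: tk y.1.2.1 y.2)) :=
        Primrec.pair (Primrec.pair (hs.comp Primrec.fst) (Primrec.const c))
          (Primrec.encode.comp (Primrec.list_cons.comp (hX.comp Primrec.fst)
            (tk_primrec.comp (has.comp Primrec.fst) Primrec.snd)))
      exact primrec_evaln.comp harg
    apply Primrec.option_bind hev
    have hdec : Primrec fun z : ((ℕ × (List ℕ × ℕ)) × ℕ) × ℕ =>
        Encodable.decode (α := Bool × ℕ) z.2 := Primrec.decode.comp Primrec.snd
    apply Primrec.option_bind hdec
    exact (Primrec.cond (Primrec.fst.comp Primrec.snd) (Primrec.const Option.none)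
      (Primrec.option_some.comp (Primrec.snd.comp Primrec.snd)))
  exact (allSome_primrec.comp
    (Primrec.list_map (Primrec.list_range.comp (Primrec.list_length.comp has)) hinner))

lemma finalCheck_primrec (c : Code) :
    Primrec₂ fun (X : ℕ) (p : (List ℕ × ℕ) × ℕ) => finalCheck c X p.1.1 p.1.2 p.2 := by
  have hX : Primrec fun x : ℕ × ((List ℕ × ℕ) × ℕ) => x.1 := Primrec.fst
  have has : Primrec fun x : ℕ × ((List ℕ × ℕ) × ℕ) => x.2.1.1 :=
    Primrec.fst.comp (Primrec.fst.comp Primrec.snd)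
  have hs : Primrec fun x : ℕ × ((List ℕ × ℕ) × ℕ) => x.2.1.2 :=
    Primrec.snd.comp (Primrec.fst.comp Primrec.snd)
  have hm : Primrec fun x : ℕ × ((List ℕ × ℕ) × ℕ) => x.2.2 :=
    Primrec.snd.comp Primrec.snd
  have hev : Primrec fun x : ℕ × ((List ℕ × ℕ) × ℕ) =>
      evaln x.2.1.2 c (Encodable.encode (x.1 :: x.2.1.1)) := by
    have harg : Primrec fun x : ℕ × ((List ℕ × ℕ) × ℕ) =>
        ((x.2.1.2, c), Encodable.encode (x.1 :: x.2.1.1)) :=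
      Primrec.pair (Primrec.pair hs (Primrec.const c))
        (Primrec.encode.comp (Primrec.list_cons.comp hX has))
    exact primrec_evaln.comp harg
  have hL : Primrec fun x : ℕ × ((List ℕ × ℕ) × ℕ) =>
      (evaln x.2.1.2 c (Encodable.encode (x.1 :: x.2.1.1))).bind fun r =>
        Encodable.decode (α := Bool × ℕ) r :=
    Primrec.option_bind hev (Primrec.decode.comp Primrec.snd)
  have hR : Primrec fun x : ℕ × ((List ℕ × ℕ) × ℕ) =>
      (some ((true, x.2.2) : Bool × ℕ)) :=
    Primrec.option_some.comp ((Primrec.const true).pair hm)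
  exact (Primrec.eq.comp hL hR).decide

def wcode (σ τ : List ℕ) : ℕ := Nat.pair (dcode σ) (Nat.pair (dcode τ) 0)

lemma wcode_primrec : Primrec₂ wcode :=
  Primrec₂.natPair.comp (dcode_primrec.comp Primrec.fst)
    (Primrec₂.natPair.comp (dcode_primrec.comp Primrec.snd) (Primrec.const 0))

lemma wcode_unpair1 (σ τ : List ℕ) : (wcode σ τ).unpair.1 = dcode σ := by
  simp [wcode]

lemma wcode_unpair21 (σ τ : List ℕ) : (wcode σ τ).unpair.2.unpair.1 = dcode τ := by
  simp [wcode]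

lemma wcode_unpair22 (σ τ : List ℕ) : (wcode σ τ).unpair.2.unpair.2 = 0 := by
  simp [wcode]


/-! ### PMeet membership -/

lemma pmeet_mem_intro {f g : ℕ → ℕ} {p m : ℕ}
    (h1 : HaltsTo (phi p.unpair.1) (f : ℕ →. ℕ) p.unpair.2.unpair.2 m)
    (h2 : HaltsTo (phi p.unpair.2.unpair.1) (g : ℕ →. ℕ) p.unpair.2.unpair.2 m) :
    m ∈ PMeet (f : ℕ →. ℕ) (g : ℕ →. ℕ) p := by
  have hd : (PMeet (f : ℕ →. ℕ) (g : ℕ →. ℕ) p).Dom := ⟨m, h1, h2⟩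
  have hspec := Classical.choose_spec hd
  exact ⟨hd, haltsTo_unique hspec.1 h1⟩

lemma pmeet_mem_elim {f g : ℕ → ℕ} {p m : ℕ}
    (h : m ∈ PMeet (f : ℕ →. ℕ) (g : ℕ →. ℕ) p) :
    HaltsTo (phi p.unpair.1) (f : ℕ →. ℕ) p.unpair.2.unpair.2 m ∧
      HaltsTo (phi p.unpair.2.unpair.1) (g : ℕ →. ℕ) p.unpair.2.unpair.2 m := by
  obtain ⟨hd, hget⟩ := h
  have hspec := Classical.choose_spec hd
  rw [← hget]
  exact hspec

lemma tester_self (f : ℕ → ℕ) (a n : ℕ) :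
    HaltsTo (phi (dcode ((List.range a).map f))) (f : ℕ →. ℕ) n 0 := by
  rw [tester_halts, List.length_map, List.length_range, if_pos rfl]

lemma tester_other {f : ℕ → ℕ} {σ : List ℕ} (hσ : σ ≠ (List.range σ.length).map f) (n : ℕ) :
    HaltsTo (phi (dcode σ)) (f : ℕ →. ℕ) n 1 := by
  rw [tester_halts, if_neg (fun hh => hσ hh.symm)]

lemma band_primrec {α : Type*} [Primcodable α] {p q : α → Bool}
    (hp : Primrec p) (hq : Primrec q) : Primrec fun a => p a && q a :=
  (hp.cond hq (Primrec.const false)).of_eq fun a => by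
    cases hpa : p a <;> simp [hpa]

/-! ### Main lemma: meet irreducibility -/

lemma main_left (f g h : ℕ → ℕ)
    (H : SubTuringLE (PMeet (f : ℕ →. ℕ) (g : ℕ →. ℕ)) (h : ℕ →. ℕ)) :
    SubTuringLE (f : ℕ →. ℕ) (h : ℕ →. ℕ) ∨ SubTuringLE (g : ℕ →. ℕ) (h : ℕ →. ℕ) := by
  classical
  obtain ⟨Ψ, hΨ, hred⟩ := H
  obtain ⟨c, hc⟩ := exists_codeFor hΨ
  set P : List ℕ → List ℕ → Prop :=
    fun σ τ => HaltsTo Ψ (h : ℕ →. ℕ) (wcode σ τ) 0 with hP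
  have Pmem : ∀ (σ τ : List ℕ) (m : ℕ),
      HaltsTo (phi (dcode σ)) (f : ℕ →. ℕ) 0 m →
      HaltsTo (phi (dcode τ)) (g : ℕ →. ℕ) 0 m →
      HaltsTo Ψ (h : ℕ →. ℕ) (wcode σ τ) m := by
    intro σ τ m h1 h2
    apply hred
    apply pmeet_mem_intro
    · rw [wcode_unpair1, wcode_unpair22]; exact h1
    · rw [wcode_unpair21, wcode_unpair22]; exact h2
  have Pa : ∀ a b : ℕ, P ((List.range a).map f) ((List.range b).map g) :=
    fun a b => Pmem _ _ 0 (tester_self f a 0) (tester_self g b 0)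
  have Pb : ∀ σ τ : List ℕ, σ ≠ (List.range σ.length).map f →
      τ ≠ (List.range τ.length).map g → ¬ P σ τ := by
    intro σ τ hσ hτ hPst
    have h1 : HaltsTo Ψ (h : ℕ →. ℕ) (wcode σ τ) 1 :=
      Pmem σ τ 1 (tester_other hσ 0) (tester_other hτ 0)
    exact absurd (haltsTo_unique hPst h1) (by norm_num)
  have Key1 : ∀ σ τ τ' : List ℕ, τ.length = τ'.length → τ ≠ τ' → P σ τ → P σ τ' →
      σ = (List.range σ.length).map f := by
    intro σ τ τ' hlen hne h1 h2
    by_contra hσ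
    have e1 : τ = (List.range τ.length).map g := by
      by_contra hτ; exact Pb σ τ hσ hτ h1
    have e2 : τ' = (List.range τ'.length).map g := by
      by_contra hτ; exact Pb σ τ' hσ hτ h2
    rw [e1, e2, hlen] at hne
    exact hne rfl
  have Pcand : ∀ σ τ : List ℕ, P σ τ → ∃ (as : List ℕ) (s : ℕ) (qs : List ℕ),
      histCheck c (wcode σ τ) as s = some qs ∧ finalCheck c (wcode σ τ) as s 0 = true ∧
      qs.length = as.length ∧ ∀ i, i < as.length → h (qs.getD i 0) = as.getD i 0 := by
    intro σ τ hPst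
    obtain ⟨as, hv, hfin⟩ := hPst
    set Q : ℕ → ℕ := fun k => if hk : k < as.length then Classical.choose (hv k hk) else 0
      with hQ
    have hQspec : ∀ k (hk : k < as.length),
        ((false, Q k) : Bool × ℕ) ∈ Ψ (wcode σ τ :: as.take k) ∧
          (as[k]'hk) ∈ (h : ℕ →. ℕ) (Q k) := by
      intro k hk
      have : Q k = Classical.choose (hv k hk) := by rw [hQ]; simp [dif_pos hk]
      rw [this]
      exact Classical.choose_spec (hv k hk)
    obtain ⟨s, hhist, hfinal⟩ := checks_complete hc (fun k hk => (hQspec k hk).1) hfin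
    refine ⟨as, s, (List.range as.length).map Q, hhist, hfinal, by simp, ?_⟩
    intro i hi
    have h2 := (hQspec i hi).2
    rw [mem_coe] at h2
    have e : ((List.range as.length).map Q).getD i 0 = Q i := by
      rw [List.getD_eq_getElem _ _ (by simpa using hi), List.getElem_map, List.getElem_range]
    rw [e, ← h2, List.getD_eq_getElem _ _ hi]
  have Pcand_rev : ∀ σ τ : List ℕ, ∀ (as : List ℕ) (s : ℕ) (qs : List ℕ),
      histCheck c (wcode σ τ) as s = some qs → finalCheck c (wcode σ τ) as s 0 = true →
      (∀ i, i < as.length → h (qs.getD i 0) = as.getD i 0) → P σ τ := by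
    intro σ τ as s qs hhist hfinal hans
    obtain ⟨hlen, hq⟩ := histCheck_sound hc hhist
    refine ⟨as, ?_, finalCheck_sound hc hfinal⟩
    intro k hk
    refine ⟨qs.getD k 0, hq k hk, ?_⟩
    rw [mem_coe]
    rw [← List.getD_eq_getElem as 0 hk]
    exact (hans k hk).symm
  by_cases CaseA : ∀ nn : ℕ, ∃ σ τ τ' : List ℕ,
      nn < σ.length ∧ τ.length = τ'.length ∧ τ ≠ τ' ∧ P σ τ ∧ P σ τ'
  · left
    set pre : ℕ → ℕ → Option (List (ℕ × ℕ) × ℕ) := fun nn t =>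
      (Encodable.decode (α := List ℕ × List ℕ × List ℕ × List ℕ × List ℕ × ℕ) t).bind
        fun x =>
        bif decide (nn < x.1.length) && decide (x.2.1.length = x.2.2.1.length) &&
            !decide (x.2.1 = x.2.2.1) &&
            finalCheck c (wcode x.1 x.2.1) x.2.2.2.1 x.2.2.2.2.2 0 &&
            finalCheck c (wcode x.1 x.2.2.1) x.2.2.2.2.1 x.2.2.2.2.2 0 then
          (histCheck c (wcode x.1 x.2.1) x.2.2.2.1 x.2.2.2.2.2).bind fun qs =>
            (histCheck c (wcode x.1 x.2.2.1) x.2.2.2.2.1 x.2.2.2.2.2).map fun qs' =>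
              (zipD qs x.2.2.2.1 ++ zipD qs' x.2.2.2.2.1, x.1.getD nn 0)
        else Option.none
      with hpre_def
    have hprim : Primrec₂ pre := by
      apply Primrec.option_bind (Primrec.decode.comp Primrec.snd)
      set α := List ℕ × List ℕ × List ℕ × List ℕ × List ℕ × ℕ with hα
      have hnn : Primrec fun z : (ℕ × ℕ) × α => z.1.1 := Primrec.fst.comp Primrec.fst
      have hσ : Primrec fun z : (ℕ × ℕ) × α => z.2.1 := Primrec.fst.comp Primrec.snd
      have hτ : Primrec fun z : (ℕ × ℕ) × α => z.2.2.1 :=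
        Primrec.fst.comp (Primrec.snd.comp Primrec.snd)
      have hτ' : Primrec fun z : (ℕ × ℕ) × α => z.2.2.2.1 :=
        Primrec.fst.comp (Primrec.snd.comp (Primrec.snd.comp Primrec.snd))
      have has : Primrec fun z : (ℕ × ℕ) × α => z.2.2.2.2.1 :=
        Primrec.fst.comp (Primrec.snd.comp (Primrec.snd.comp (Primrec.snd.comp Primrec.snd)))
      have has' : Primrec fun z : (ℕ × ℕ) × α => z.2.2.2.2.2.1 :=
        Primrec.fst.comp (Primrec.snd.comp (Primrec.snd.comp (Primrec.snd.comp
          (Primrec.snd.comp Primrec.snd))))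
      have hs : Primrec fun z : (ℕ × ℕ) × α => z.2.2.2.2.2.2 :=
        Primrec.snd.comp (Primrec.snd.comp (Primrec.snd.comp (Primrec.snd.comp
          (Primrec.snd.comp Primrec.snd))))
      have hW1 : Primrec fun z : (ℕ × ℕ) × α => wcode z.2.1 z.2.2.1 :=
        wcode_primrec.comp hσ hτ
      have hW2 : Primrec fun z : (ℕ × ℕ) × α => wcode z.2.1 z.2.2.2.1 :=
        wcode_primrec.comp hσ hτ'
      have hb1 : Primrec fun z : (ℕ × ℕ) × α => decide (z.1.1 < z.2.1.length) :=
        (Primrec.nat_lt.comp hnn (Primrec.list_length.comp hσ)).decide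
      have hb2 : Primrec fun z : (ℕ × ℕ) × α =>
          decide (z.2.2.1.length = z.2.2.2.1.length) :=
        (Primrec.eq.comp (Primrec.list_length.comp hτ) (Primrec.list_length.comp hτ')).decide
      have hb3 : Primrec fun z : (ℕ × ℕ) × α => !decide (z.2.2.1 = z.2.2.2.1) :=
        Primrec.not.comp (Primrec.eq.comp hτ hτ').decide
      have hb4 : Primrec fun z : (ℕ × ℕ) × α =>
          finalCheck c (wcode z.2.1 z.2.2.1) z.2.2.2.2.1 z.2.2.2.2.2.2 0 :=
        (finalCheck_primrec c).comp hW1 ((has.pair hs).pair (Primrec.const 0))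
      have hb5 : Primrec fun z : (ℕ × ℕ) × α =>
          finalCheck c (wcode z.2.1 z.2.2.2.1) z.2.2.2.2.2.1 z.2.2.2.2.2.2 0 :=
        (finalCheck_primrec c).comp hW2 ((has'.pair hs).pair (Primrec.const 0))
      have hcond := band_primrec (band_primrec (band_primrec (band_primrec hb1 hb2) hb3)
        hb4) hb5
      apply Primrec.cond hcond
      · have hh1 : Primrec fun z : (ℕ × ℕ) × α =>
            histCheck c (wcode z.2.1 z.2.2.1) z.2.2.2.2.1 z.2.2.2.2.2.2 :=
          (histCheck_primrec c).comp hW1 (has.pair hs)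
        apply Primrec.option_bind hh1
        have hh2 : Primrec fun y : ((ℕ × ℕ) × α) × List ℕ =>
            histCheck c (wcode y.1.2.1 y.1.2.2.2.1) y.1.2.2.2.2.2.1 y.1.2.2.2.2.2.2 :=
          (histCheck_primrec c).comp (hW2.comp Primrec.fst)
            ((has'.comp Primrec.fst).pair (hs.comp Primrec.fst))
        apply Primrec.option_map hh2
        have hfin : Primrec fun u : (((ℕ × ℕ) × α) × List ℕ) × List ℕ =>
            (zipD u.1.2 u.1.1.2.2.2.2.1 ++ zipD u.2 u.1.1.2.2.2.2.2.1,
              u.1.1.2.1.getD u.1.1.1.1 0) := by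
          refine Primrec.pair ?_ ?_
          · exact Primrec.list_append.comp
              (zipD_primrec.comp (Primrec.snd.comp Primrec.fst)
                ((has.comp Primrec.fst).comp Primrec.fst))
              (zipD_primrec.comp Primrec.snd
                ((has'.comp Primrec.fst).comp Primrec.fst))
          · exact (Primrec.list_getD 0).comp ((hσ.comp Primrec.fst).comp Primrec.fst)
              ((hnn.comp Primrec.fst).comp Primrec.fst)
        exact hfin
      · exact Primrec.const Option.none
    apply search_reduction hprim
    · -- soundness
      intro nn t qas out hp hans
      rw [Option.bind_eq_some_iff] at hp
      obtain ⟨x, hdec, hbody⟩ := hp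
      rcases hcond : (decide (nn < x.1.length) && decide (x.2.1.length = x.2.2.1.length) &&
          !decide (x.2.1 = x.2.2.1) &&
          finalCheck c (wcode x.1 x.2.1) x.2.2.2.1 x.2.2.2.2.2 0 &&
          finalCheck c (wcode x.1 x.2.2.1) x.2.2.2.2.1 x.2.2.2.2.2 0) with _ | _
      · rw [hcond, Bool.cond_false] at hbody
        exact absurd hbody (by simp)
      · rw [hcond, Bool.cond_true] at hbody
        simp only [Bool.and_eq_true, decide_eq_true_eq, Bool.not_eq_true',
          decide_eq_false_iff_not] at hcond
        obtain ⟨⟨⟨⟨hn1, hn2⟩, hn3⟩, hn4⟩, hn5⟩ := hcond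
        rw [Option.bind_eq_some_iff] at hbody
        obtain ⟨qs, hh1, hmap⟩ := hbody
        rw [Option.map_eq_some_iff] at hmap
        obtain ⟨qs', hh2, heq⟩ := hmap
        have hout : out = x.1.getD nn 0 := (congrArg Prod.snd heq).symm
        have hqas : qas = zipD qs x.2.2.2.1 ++ zipD qs' x.2.2.2.2.1 :=
          (congrArg Prod.fst heq).symm
        have hlen1 := (histCheck_sound hc hh1).1
        have hlen2 := (histCheck_sound hc hh2).1
        have hP1 : P x.1 x.2.1 := by
          apply Pcand_rev _ _ _ _ _ hh1 hn4
          intro i hi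
          have hm : (qs.getD i 0, x.2.2.2.1.getD i 0) ∈ qas := by
            rw [hqas]
            apply List.mem_append_left
            rw [mem_zipD]
            exact ⟨i, by omega, rfl⟩
          exact hans _ hm
        have hP2 : P x.1 x.2.2.1 := by
          apply Pcand_rev _ _ _ _ _ hh2 hn5
          intro i hi
          have hm : (qs'.getD i 0, x.2.2.2.2.1.getD i 0) ∈ qas := by
            rw [hqas]
            apply List.mem_append_right
            rw [mem_zipD]
            exact ⟨i, by omega, rfl⟩
          exact hans _ hm
        have hσf : x.1 = (List.range x.1.length).map f := Key1 _ _ _ hn2 hn3 hP1 hP2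
        rw [hout, hσf, List.getD_eq_getElem _ _ (by simpa using hn1),
          List.getElem_map, List.getElem_range]
    · -- existence
      intro nn
      obtain ⟨σ, τ, τ', h1, h2, h3, hPt, hPt'⟩ := CaseA nn
      obtain ⟨as, s, qs, hhist, hfinal, hlen, hans⟩ := Pcand σ τ hPt
      obtain ⟨as', s', qs', hhist', hfinal', hlen', hans'⟩ := Pcand σ τ' hPt'
      set s2 := max s s' with hs2
      have hhist2 := histCheck_mono (le_max_left s s') hhist
      have hfinal2 := finalCheck_mono (le_max_left s s') hfinal
      have hhist2' := histCheck_mono (le_max_right s s') hhist'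
      have hfinal2' := finalCheck_mono (le_max_right s s') hfinal'
      refine ⟨Encodable.encode ((σ, τ, τ', as, as', s2) :
        List ℕ × List ℕ × List ℕ × List ℕ × List ℕ × ℕ),
        zipD qs as ++ zipD qs' as', σ.getD nn 0, ?_, ?_⟩
      · show (Encodable.decode (α := List ℕ × List ℕ × List ℕ × List ℕ × List ℕ × ℕ)
          (Encodable.encode ((σ, τ, τ', as, as', s2) :
            List ℕ × List ℕ × List ℕ × List ℕ × List ℕ × ℕ))).bind _ = _
        rw [Encodable.encodek, Option.bind_some]
        have hc1 : decide (nn < σ.length) = true := decide_eq_true h1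
        have hc2 : decide (τ.length = τ'.length) = true := decide_eq_true h2
        have hc3 : decide (τ = τ') = false := decide_eq_false h3
        show (bif decide (nn < σ.length) && decide (τ.length = τ'.length) && !decide (τ = τ')
            && finalCheck c (wcode σ τ) as s2 0 && finalCheck c (wcode σ τ') as' s2 0 then _
          else Option.none) = _
        rw [hc1, hc2, hc3, hfinal2, hfinal2']
        show (bif true then
          ((histCheck c (wcode σ τ) as s2).bind fun qs0 =>
            (histCheck c (wcode σ τ') as' s2).map fun qs0' =>
              (zipD qs0 as ++ zipD qs0' as', σ.getD nn 0)) else Option.none) = _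
        rw [Bool.cond_true, hhist2, Option.bind_some, hhist2', Option.map_some]
      · intro p hp
        rcases List.mem_append.1 hp with hm | hm
        · rw [mem_zipD] at hm
          obtain ⟨i, hi, rfl⟩ := hm
          exact hans i (by omega)
        · rw [mem_zipD] at hm
          obtain ⟨i, hi, rfl⟩ := hm
          exact hans' i (by omega)
  · right
    push_neg at CaseA
    obtain ⟨n0, hn0⟩ := CaseA
    have Key2 : ∀ σ τ : List ℕ, n0 < σ.length → σ.length = τ.length → P σ τ →
        τ = (List.range τ.length).map g := by
      intro σ τ h1 h2 hPst
      by_contra hτ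
      have hσe : σ = (List.range σ.length).map f := by
        by_contra hσ
        exact Pb σ τ hσ hτ hPst
      have hPtrue : P σ ((List.range σ.length).map g) := by
        have := Pa σ.length σ.length
        rw [← hσe] at this
        exact this
      have hne : τ ≠ (List.range σ.length).map g := by
        rw [h2] at *
        intro hcon
        rw [← h2] at hcon
        rw [h2] at hcon
        exact hτ hcon
      have hlen2 : τ.length = ((List.range σ.length).map g).length := by
        simp [h2]
      exact hn0 σ τ ((List.range σ.length).map g) h1 hlen2 hne hPst hPtrue
    set pre : ℕ → ℕ → Option (List (ℕ × ℕ) × ℕ) := fun nn t =>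
      (Encodable.decode (α := List ℕ × List ℕ × List ℕ × ℕ) t).bind fun x =>
        bif decide (x.1.length = n0 + nn + 1) && decide (x.2.1.length = n0 + nn + 1) &&
            finalCheck c (wcode x.1 x.2.1) x.2.2.1 x.2.2.2 0 then
          (histCheck c (wcode x.1 x.2.1) x.2.2.1 x.2.2.2).map fun qs =>
            (zipD qs x.2.2.1, x.2.1.getD nn 0)
        else Option.none
      with hpre_def
    have hprim : Primrec₂ pre := by
      apply Primrec.option_bind (Primrec.decode.comp Primrec.snd)
      set β := List ℕ × List ℕ × List ℕ × ℕ with hβ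
      have hnn : Primrec fun z : (ℕ × ℕ) × β => z.1.1 := Primrec.fst.comp Primrec.fst
      have hσ : Primrec fun z : (ℕ × ℕ) × β => z.2.1 := Primrec.fst.comp Primrec.snd
      have hτ : Primrec fun z : (ℕ × ℕ) × β => z.2.2.1 :=
        Primrec.fst.comp (Primrec.snd.comp Primrec.snd)
      have has : Primrec fun z : (ℕ × ℕ) × β => z.2.2.2.1 :=
        Primrec.fst.comp (Primrec.snd.comp (Primrec.snd.comp Primrec.snd))
      have hs : Primrec fun z : (ℕ × ℕ) × β => z.2.2.2.2 :=
        Primrec.snd.comp (Primrec.snd.comp (Primrec.snd.comp Primrec.snd))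
      have hW : Primrec fun z : (ℕ × ℕ) × β => wcode z.2.1 z.2.2.1 :=
        wcode_primrec.comp hσ hτ
      have hln : Primrec fun z : (ℕ × ℕ) × β => n0 + z.1.1 + 1 :=
        Primrec.succ.comp ((Primrec.nat_add.comp (Primrec.const n0) hnn))
      have hb1 : Primrec fun z : (ℕ × ℕ) × β => decide (z.2.1.length = n0 + z.1.1 + 1) :=
        (Primrec.eq.comp (Primrec.list_length.comp hσ) hln).decide
      have hb2 : Primrec fun z : (ℕ × ℕ) × β => decide (z.2.2.1.length = n0 + z.1.1 + 1) :=
        (Primrec.eq.comp (Primrec.list_length.comp hτ) hln).decide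
      have hb3 : Primrec fun z : (ℕ × ℕ) × β =>
          finalCheck c (wcode z.2.1 z.2.2.1) z.2.2.2.1 z.2.2.2.2 0 :=
        (finalCheck_primrec c).comp hW ((has.pair hs).pair (Primrec.const 0))
      have hcond := band_primrec (band_primrec hb1 hb2) hb3
      apply Primrec.cond hcond
      · have hh1 : Primrec fun z : (ℕ × ℕ) × β =>
            histCheck c (wcode z.2.1 z.2.2.1) z.2.2.2.1 z.2.2.2.2 :=
          (histCheck_primrec c).comp hW (has.pair hs)
        apply Primrec.option_map hh1
        exact Primrec.pair
          (zipD_primrec.comp Primrec.snd (has.comp Primrec.fst))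
          ((Primrec.list_getD 0).comp (hτ.comp Primrec.fst) (hnn.comp Primrec.fst))
      · exact Primrec.const Option.none
    apply search_reduction hprim
    · intro nn t qas out hp hans
      rw [Option.bind_eq_some_iff] at hp
      obtain ⟨x, hdec, hbody⟩ := hp
      rcases hcond : (decide (x.1.length = n0 + nn + 1) &&
          decide (x.2.1.length = n0 + nn + 1) &&
          finalCheck c (wcode x.1 x.2.1) x.2.2.1 x.2.2.2 0) with _ | _
      · rw [hcond, Bool.cond_false] at hbody
        exact absurd hbody (by simp)
      · rw [hcond, Bool.cond_true] at hbody
        simp only [Bool.and_eq_true, decide_eq_true_eq] at hcond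
        obtain ⟨⟨hn1, hn2⟩, hn3⟩ := hcond
        rw [Option.map_eq_some_iff] at hbody
        obtain ⟨qs, hh1, heq⟩ := hbody
        have hout : out = x.2.1.getD nn 0 := (congrArg Prod.snd heq).symm
        have hqas : qas = zipD qs x.2.2.1 := (congrArg Prod.fst heq).symm
        have hlen1 := (histCheck_sound hc hh1).1
        have hP1 : P x.1 x.2.1 := by
          apply Pcand_rev _ _ _ _ _ hh1 hn3
          intro i hi
          have hm : (qs.getD i 0, x.2.2.1.getD i 0) ∈ qas := by
            rw [hqas, mem_zipD]
            exact ⟨i, by omega, rfl⟩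
          exact hans _ hm
        have hτg : x.2.1 = (List.range x.2.1.length).map g :=
          Key2 _ _ (by omega) (by omega) hP1
        rw [hout, hτg, List.getD_eq_getElem _ _ (by simp; omega),
          List.getElem_map, List.getElem_range]
    · intro nn
      have hPt : P ((List.range (n0 + nn + 1)).map f) ((List.range (n0 + nn + 1)).map g) :=
        Pa _ _
      obtain ⟨as, s, qs, hhist, hfinal, hlen, hans⟩ := Pcand _ _ hPt
      refine ⟨Encodable.encode (((List.range (n0 + nn + 1)).map f,
          (List.range (n0 + nn + 1)).map g, as, s) : List ℕ × List ℕ × List ℕ × ℕ),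
        zipD qs as, ((List.range (n0 + nn + 1)).map g).getD nn 0, ?_, ?_⟩
      · show (Encodable.decode (α := List ℕ × List ℕ × List ℕ × ℕ)
          (Encodable.encode ((((List.range (n0 + nn + 1)).map f),
            ((List.range (n0 + nn + 1)).map g), as, s) :
              List ℕ × List ℕ × List ℕ × ℕ))).bind _ = _
        rw [Encodable.encodek, Option.bind_some]
        have hc1 : decide (((List.range (n0 + nn + 1)).map f).length = n0 + nn + 1) = true :=
          decide_eq_true (by simp)
        have hc2 : decide (((List.range (n0 + nn + 1)).map g).length = n0 + nn + 1) = true :=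
          decide_eq_true (by simp)
        show (bif decide (((List.range (n0 + nn + 1)).map f).length = n0 + nn + 1) &&
            decide (((List.range (n0 + nn + 1)).map g).length = n0 + nn + 1) &&
            finalCheck c (wcode ((List.range (n0 + nn + 1)).map f)
              ((List.range (n0 + nn + 1)).map g)) as s 0 then _ else Option.none) = _
        rw [hc1, hc2, hfinal]
        show (bif true then
          ((histCheck c (wcode ((List.range (n0 + nn + 1)).map f)
              ((List.range (n0 + nn + 1)).map g)) as s).map fun qs0 =>
            (zipD qs0 as, ((List.range (n0 + nn + 1)).map g).getD nn 0))
          else Option.none) = _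
        rw [Bool.cond_true, hhist, Option.map_some]
      · intro p hp
        rw [mem_zipD] at hp
        obtain ⟨i, hi, rfl⟩ := hp
        exact hans i (by omega)


/-! ### Part 2 -/

lemma pmeet_le_left (f g : ℕ → ℕ) :
    SubTuringLE (PMeet (f : ℕ →. ℕ) (g : ℕ →. ℕ)) (f : ℕ →. ℕ) := by
  refine ⟨fun l => phi l.headI.unpair.1 (l.headI.unpair.2.unpair.2 :: l.tail), ?_, ?_⟩
  · have heval : Partrec fun l : List ℕ =>
        ((Denumerable.ofNat Code l.headI.unpair.1).eval
          (Encodable.encode (l.headI.unpair.2.unpair.2 :: l.tail))).bind fun k =>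
            Part.ofOption (Encodable.decode (α := Bool × ℕ) k) := by
      have h1 : Computable fun l : List ℕ => Denumerable.ofNat Code l.headI.unpair.1 :=
        (Computable.ofNat Code).comp
          ((Primrec.fst.comp (Primrec.unpair.comp Primrec.list_headI)).to_comp)
      have h2 : Computable fun l : List ℕ =>
          Encodable.encode (l.headI.unpair.2.unpair.2 :: l.tail) :=
        (Primrec.encode.comp (Primrec.list_cons.comp
          (Primrec.snd.comp (Primrec.unpair.comp
            (Primrec.snd.comp (Primrec.unpair.comp Primrec.list_headI))))
          Primrec.list_tail)).to_comp
      have hg : Partrec₂ fun (_ : List ℕ) (k : ℕ) =>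
          Part.ofOption (Encodable.decode (α := Bool × ℕ) k) :=
        Computable.ofOption (Computable.decode.comp Computable.snd)
      exact (eval_part.comp h1 h2).bind hg
    exact heval
  · intro n m hm
    have helim := (pmeet_mem_elim hm).1
    obtain ⟨as, hv, hfin⟩ := helim
    refine ⟨as, ?_, ?_⟩
    · intro k hk
      obtain ⟨q, hq, ha⟩ := hv k hk
      exact ⟨q, hq, ha⟩
    · exact hfin

lemma pmeet_le_right (f g : ℕ → ℕ) :
    SubTuringLE (PMeet (f : ℕ →. ℕ) (g : ℕ →. ℕ)) (g : ℕ →. ℕ) := by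
  refine ⟨fun l => phi l.headI.unpair.2.unpair.1 (l.headI.unpair.2.unpair.2 :: l.tail), ?_, ?_⟩
  · have heval : Partrec fun l : List ℕ =>
        ((Denumerable.ofNat Code l.headI.unpair.2.unpair.1).eval
          (Encodable.encode (l.headI.unpair.2.unpair.2 :: l.tail))).bind fun k =>
            Part.ofOption (Encodable.decode (α := Bool × ℕ) k) := by
      have h1 : Computable fun l : List ℕ =>
          Denumerable.ofNat Code l.headI.unpair.2.unpair.1 :=
        (Computable.ofNat Code).comp
          ((Primrec.fst.comp (Primrec.unpair.comp
            (Primrec.snd.comp (Primrec.unpair.comp Primrec.list_headI)))).to_comp)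
      have h2 : Computable fun l : List ℕ =>
          Encodable.encode (l.headI.unpair.2.unpair.2 :: l.tail) :=
        (Primrec.encode.comp (Primrec.list_cons.comp
          (Primrec.snd.comp (Primrec.unpair.comp
            (Primrec.snd.comp (Primrec.unpair.comp Primrec.list_headI))))
          Primrec.list_tail)).to_comp
      have hg : Partrec₂ fun (_ : List ℕ) (k : ℕ) =>
          Part.ofOption (Encodable.decode (α := Bool × ℕ) k) :=
        Computable.ofOption (Computable.decode.comp Computable.snd)
      exact (eval_part.comp h1 h2).bind hg
    exact heval
  · intro n m hm
    have helim := (pmeet_mem_elim hm).2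
    obtain ⟨as, hv, hfin⟩ := helim
    refine ⟨as, ?_, ?_⟩
    · intro k hk
      obtain ⟨q, hq, ha⟩ := hv k hk
      exact ⟨q, hq, ha⟩
    · exact hfin

lemma le_const_of_ext {p q : ℕ →. ℕ} (hq : Partrec q)
    (hext : ∀ n m, m ∈ p n → m ∈ q n) :
    SubTuringLE p ((fun _ : ℕ => 0) : ℕ → ℕ) := by
  refine ⟨fun l => (q l.headI).map fun m => ((true, m) : Bool × ℕ), ?_, ?_⟩
  · have hg : Computable₂ fun (_ : List ℕ) (m : ℕ) => ((true, m) : Bool × ℕ) :=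
      (Computable.const true).pair Computable.snd
    exact (hq.comp Primrec.list_headI.to_comp).map hg
  · intro n m hm
    refine ⟨[], ?_, ?_⟩
    · intro k hk
      exact absurd hk (by simp)
    · rw [Part.mem_map_iff]
      exact ⟨m, hext n m hm, rfl⟩

lemma all_zero_iff {as : List ℕ} :
    (as.foldr (fun a b => (a == 0) && b) true) = true ↔ ∀ i, i < as.length → as.getD i 0 = 0 := by
  induction as with
  | nil => simp
  | cons a l ih =>
    simp only [List.foldr_cons, Bool.and_eq_true, beq_iff_eq, ih]
    constructor
    · rintro ⟨h0, hrest⟩ i hi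
      cases i with
      | zero => simpa using h0
      | succ j =>
        have : j < l.length := by simpa using hi
        simpa using hrest j this
    · intro hall
      refine ⟨by simpa using hall 0 (by simp), fun i hi => ?_⟩
      have := hall (i + 1) (by simpa using hi)
      simpa using this

lemma computable_of_le_zero {F : ℕ → ℕ}
    (H : SubTuringLE (F : ℕ →. ℕ) ((fun _ : ℕ => 0) : ℕ → ℕ)) : Computable F := by
  classical
  obtain ⟨Ψ, hΨ, hred⟩ := H
  obtain ⟨c, hc⟩ := exists_codeFor hΨ
  set chk : ℕ → ℕ → Option ℕ := fun n t =>
    (Encodable.decode (α := ℕ × List ℕ × ℕ) t).bind fun x =>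
      bif (histCheck c n x.2.1 x.2.2).isSome && finalCheck c n x.2.1 x.2.2 x.1 &&
          (x.2.1.foldr (fun a b => (a == 0) && b) true) then some x.1 else Option.none
    with hchk
  have hchkcomp : Computable₂ chk := by
    have hprim : Primrec₂ chk := by
      apply Primrec.option_bind (Primrec.decode.comp Primrec.snd)
      have hn : Primrec fun z : (ℕ × ℕ) × (ℕ × List ℕ × ℕ) => z.1.1 :=
        Primrec.fst.comp Primrec.fst
      have hm : Primrec fun z : (ℕ × ℕ) × (ℕ × List ℕ × ℕ) => z.2.1 :=
        Primrec.fst.comp Primrec.snd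
      have has : Primrec fun z : (ℕ × ℕ) × (ℕ × List ℕ × ℕ) => z.2.2.1 :=
        Primrec.fst.comp (Primrec.snd.comp Primrec.snd)
      have hs : Primrec fun z : (ℕ × ℕ) × (ℕ × List ℕ × ℕ) => z.2.2.2 :=
        Primrec.snd.comp (Primrec.snd.comp Primrec.snd)
      have hb1 : Primrec fun z : (ℕ × ℕ) × (ℕ × List ℕ × ℕ) =>
          (histCheck c z.1.1 z.2.2.1 z.2.2.2).isSome :=
        Primrec.option_isSome.comp ((histCheck_primrec c).comp hn (has.pair hs))
      have hb2 : Primrec fun z : (ℕ × ℕ) × (ℕ × List ℕ × ℕ) =>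
          finalCheck c z.1.1 z.2.2.1 z.2.2.2 z.2.1 :=
        (finalCheck_primrec c).comp hn ((has.pair hs).pair hm)
      have hb3 : Primrec fun z : (ℕ × ℕ) × (ℕ × List ℕ × ℕ) =>
          (z.2.2.1.foldr (fun a b => (a == 0) && b) true) := by
        have hstep : Primrec₂ fun (_ : (ℕ × ℕ) × (ℕ × List ℕ × ℕ)) (y : ℕ × Bool) =>
            ((y.1 == 0) && y.2) :=
          band_primrec (Primrec.beq.comp (Primrec.fst.comp Primrec.snd)
            (Primrec.const 0)) (Primrec.snd.comp Primrec.snd)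
        exact Primrec.list_foldr has (Primrec.const true) hstep
      exact Primrec.cond (band_primrec (band_primrec hb1 hb2) hb3)
        (Primrec.option_some.comp hm) (Primrec.const Option.none)
    exact hprim.to_comp
  have hpart : Partrec fun n => Nat.rfindOpt (chk n) := Partrec.rfindOpt hchkcomp
  apply hpart.of_eq_tot
  intro n
  -- candidate exists
  have hhalts : HaltsTo Ψ ((fun _ : ℕ => 0 : ℕ → ℕ) : ℕ →. ℕ) n (F n) :=
    hred n (F n) (by rw [mem_coe])
  have hex : ∃ t a, a ∈ chk n t := by
    obtain ⟨as, hv, hfin⟩ := hhalts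
    set Q : ℕ → ℕ := fun k => if hk : k < as.length then Classical.choose (hv k hk) else 0
      with hQ
    have hQspec : ∀ k (hk : k < as.length),
        ((false, Q k) : Bool × ℕ) ∈ Ψ (n :: as.take k) ∧
          (as[k]'hk) ∈ ((fun _ : ℕ => 0 : ℕ → ℕ) : ℕ →. ℕ) (Q k) := by
      intro k hk
      have : Q k = Classical.choose (hv k hk) := by rw [hQ]; simp [dif_pos hk]
      rw [this]
      exact Classical.choose_spec (hv k hk)
    obtain ⟨s, hhist, hfinal⟩ := checks_complete hc (fun k hk => (hQspec k hk).1) hfin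
    refine ⟨Encodable.encode ((F n, as, s) : ℕ × List ℕ × ℕ), F n, ?_⟩
    show ((Encodable.decode (α := ℕ × List ℕ × ℕ)
      (Encodable.encode ((F n, as, s) : ℕ × List ℕ × ℕ))).bind fun x =>
        bif (histCheck c n x.2.1 x.2.2).isSome && finalCheck c n x.2.1 x.2.2 x.1 &&
          (x.2.1.foldr (fun a b => (a == 0) && b) true) then some x.1 else Option.none)
      = some (F n)
    rw [Encodable.encodek, Option.bind_some]
    have e1 : (histCheck c n as s).isSome = true := by rw [hhist]; rfl
    have e3 : (as.foldr (fun a b => (a == 0) && b) true) = true := by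
      rw [all_zero_iff]
      intro i hi
      have := (hQspec i hi).2
      rw [mem_coe] at this
      rw [List.getD_eq_getElem _ _ hi, this]
    show (bif (histCheck c n as s).isSome && finalCheck c n as s (F n) &&
        (as.foldr (fun a b => (a == 0) && b) true) then some (F n) else Option.none)
      = some (F n)
    rw [e1, hfinal, e3]
    rfl
  -- soundness: any output equals F n
  have hsound : ∀ t a, a ∈ chk n t → a = F n := by
    intro t a ha
    have ha2 : chk n t = some a := ha
    rw [hchk] at ha2
    rw [Option.bind_eq_some_iff] at ha2
    obtain ⟨x, hdec, hbody⟩ := ha2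
    rcases hcond : ((histCheck c n x.2.1 x.2.2).isSome && finalCheck c n x.2.1 x.2.2 x.1 &&
        (x.2.1.foldr (fun a b => (a == 0) && b) true)) with _ | _
    · rw [hcond, Bool.cond_false] at hbody
      exact absurd hbody (by simp)
    · rw [hcond, Bool.cond_true, Option.some.injEq] at hbody
      subst hbody
      simp only [Bool.and_eq_true] at hcond
      obtain ⟨⟨hb1, hb2⟩, hb3⟩ := hcond
      rw [Option.isSome_iff_exists] at hb1
      obtain ⟨qs, hqs⟩ := hb1
      obtain ⟨hlen, hq⟩ := histCheck_sound hc hqs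
      have hhalt2 : HaltsTo Ψ ((fun _ : ℕ => 0 : ℕ → ℕ) : ℕ →. ℕ) n x.1 := by
        refine ⟨x.2.1, ?_, finalCheck_sound hc hb2⟩
        intro k hk
        refine ⟨qs.getD k 0, hq k hk, ?_⟩
        rw [mem_coe]
        rw [all_zero_iff] at hb3
        rw [← List.getD_eq_getElem x.2.1 0 hk]
        exact hb3 k hk
      exact haltsTo_unique hhalt2 hhalts
  -- conclude
  obtain ⟨t0, a0, ha0⟩ := hex
  have hdom : (Nat.rfindOpt (chk n)).Dom := Nat.rfindOpt_dom.2 ⟨t0, a0, ha0⟩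
  have hget := Part.get_mem hdom
  obtain ⟨t1, ht1⟩ := Nat.rfindOpt_spec hget
  have := hsound t1 _ ht1
  rw [← this]
  exact hget


end STAux

theorem total_meet_irreducible :
    (∀ f g h : ℕ → ℕ,
      SubTuringLE (PMeet (f : ℕ →. ℕ) (g : ℕ →. ℕ)) (h : ℕ →. ℕ) →
      SubTuringLE (f : ℕ →. ℕ) (h : ℕ →. ℕ) ∨ SubTuringLE (g : ℕ →. ℕ) (h : ℕ →. ℕ)) ∧
    ¬ ∃ f g : ℕ → ℕ, ¬ Computable f ∧ ¬ Computable g ∧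
      ∀ p : ℕ →. ℕ, SubTuringLE p (f : ℕ →. ℕ) → SubTuringLE p (g : ℕ →. ℕ) →
        ∃ q : ℕ →. ℕ, Partrec q ∧ ∀ n m, m ∈ p n → m ∈ q n := by
  constructor
  · exact fun f g h => STAux.main_left f g h
  · rintro ⟨f, g, hf, hg, hmin⟩
    obtain ⟨q, hq, hext⟩ := hmin (PMeet (f : ℕ →. ℕ) (g : ℕ →. ℕ))
      (STAux.pmeet_le_left f g) (STAux.pmeet_le_right f g)
    have h0 : SubTuringLE (PMeet (f : ℕ →. ℕ) (g : ℕ →. ℕ))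
        (((fun _ : ℕ => 0) : ℕ → ℕ) : ℕ →. ℕ) := STAux.le_const_of_ext hq hext
    rcases STAux.main_left f g (fun _ => 0) h0 with h | h
    · exact hf (STAux.computable_of_le_zero h)
    · exact hg (STAux.computable_of_le_zero h)
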